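/- Let q > 0, let U ⊆ ℂ be open with [−q,q] ⊂ U, and let ν : ℂ → ℂ be holomorphic on U. For λ ∈ U \ [−q,q] define κ(λ) = exp( −∫_{−q}^{q} (ν(λ)−ν(μ))/(λ−μ) dμ ) and α(λ) = κ(λ) · exp( ν(λ) · Log((λ+q)/(λ−q)) ), where Log is the principal branch of the complex logarithm. Then for every t ∈ (−q,q) the one-sided limits α₊(t) = lim_{ε→0⁺} α(t+iε) and α₋(t) = lim_{ε→0⁺} α(t−iε) both exist, and they satisfy the jump relation α₊(t) · exp(2iπν(t)) = α₋(t). -/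

import Mathlib

open Set Filter MeasureTheory Metric Complex Topology

private lemma jump_kappa_integral_tendsto (q : ℝ) (hq : 0 < q) (U : Set ℂ) (hU : IsOpen U)
    (hsub : (fun x : ℝ => (x : ℂ)) '' Set.Icc (-q) q ⊆ U)
    (ν : ℂ → ℂ) (hν : DifferentiableOn ℂ ν U)
    (t : ℝ) (ht1 : -q < t) (ht2 : t < q)
    (f : ℝ → ℂ) (hf : Tendsto f (𝓝[>] (0:ℝ)) (𝓝 (t : ℂ))) :
    Tendsto (fun ε : ℝ => ∫ μ in Ioc (-q) q, (ν (f ε) - ν (μ : ℂ)) / (f ε - (μ : ℂ)))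
      (𝓝[>] (0:ℝ))
      (𝓝 (∫ μ in Ioc (-q) q, (ν (t : ℂ) - ν (μ : ℂ)) / ((t : ℂ) - (μ : ℂ)))) := by
  have hc : (t : ℂ) ∈ U := hsub ⟨t, ⟨ht1.le, ht2.le⟩, rfl⟩
  set S : Set ℂ := (fun x : ℝ => (x : ℂ)) '' Set.Icc (-q) q with hS
  have hScomp : IsCompact S := isCompact_Icc.image Complex.continuous_ofReal
  have hSconv : Convex ℝ S := by
    have := (convex_Icc (-q) q).linear_image (Complex.ofRealCLM : ℝ →L[ℝ] ℂ).toLinearMap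
    simpa [hS] using this
  obtain ⟨r, hr0, hrU⟩ := hScomp.exists_cthickening_subset_open hU hsub
  set K := cthickening r S with hK
  have hKcomp : IsCompact K := hScomp.cthickening
  have hKconv : Convex ℝ K := hSconv.cthickening r
  have hSK : S ⊆ K := self_subset_cthickening _
  have han : AnalyticOnNhd ℂ ν U := hν.analyticOnNhd hU
  obtain ⟨C, hC⟩ := hKcomp.exists_bound_of_continuousOn (han.deriv.continuousOn.mono hrU)
  have hM : ∀ x ∈ K, ∀ y ∈ K, ‖ν y - ν x‖ ≤ C * ‖y - x‖ := by
    intro x hx y hy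
    refine hKconv.norm_image_sub_le_of_norm_hasFDerivWithin_le
      (f' := fun z => ContinuousLinearMap.smulRight (1 : ℂ →L[ℂ] ℂ) (deriv ν z))
      (fun z hz => ((hν.differentiableAt
        (hU.mem_nhds (hrU hz))).hasDerivAt.hasFDerivAt).hasFDerivWithinAt)
      (fun z hz => by
        simpa [ContinuousLinearMap.norm_smulRight_apply] using hC z hz) hx hy
  have hC0 : 0 ≤ C := le_trans (norm_nonneg _) (hC _ (hSK ⟨t, ⟨ht1.le, ht2.le⟩, rfl⟩))
  have hmeas : ∀ lam : ℂ,
      AEStronglyMeasurable (fun μ : ℝ => (ν lam - ν (μ : ℂ)) / (lam - (μ : ℂ)))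
        (volume.restrict (Ioc (-q) q)) := by
    intro lam
    have h1 : ContinuousOn (fun μ : ℝ => ν (μ : ℂ)) (Ioc (-q) q) := by
      refine hν.continuousOn.comp Complex.continuous_ofReal.continuousOn ?_
      intro x hx
      exact hsub ⟨x, ⟨hx.1.le, hx.2⟩, rfl⟩
    have h2 : AEStronglyMeasurable (fun μ : ℝ => ν lam - ν (μ : ℂ))
        (volume.restrict (Ioc (-q) q)) :=
      (continuousOn_const.sub h1).aestronglyMeasurable measurableSet_Ioc
    have h3 : Measurable fun μ : ℝ => (lam - (μ : ℂ))⁻¹ :=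
      (measurable_const.sub Complex.measurable_ofReal).inv
    simpa [div_eq_mul_inv, Pi.mul_def] using h2.mul h3.aestronglyMeasurable
  have hfev : ∀ᶠ ε in 𝓝[>] (0:ℝ), f ε ∈ K := by
    have hball : closedBall (t : ℂ) r ∈ 𝓝 (t : ℂ) := closedBall_mem_nhds _ hr0
    filter_upwards [hf hball] with ε hε
    exact mem_cthickening_of_dist_le _ _ _ _ ⟨t, ⟨ht1.le, ht2.le⟩, rfl⟩ hε
  have h_ne : ∀ᵐ μ : ℝ ∂volume.restrict (Ioc (-q) q), μ ≠ t := by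
    refine ae_restrict_of_ae ?_
    have h : {μ : ℝ | ¬ μ ≠ t} = {t} := by ext; simp
    rw [ae_iff, h]
    exact measure_singleton t
  refine tendsto_integral_filter_of_dominated_convergence (fun _ => C) ?_ ?_ ?_ ?_
  · exact Eventually.of_forall fun ε => hmeas _
  · filter_upwards [hfev] with ε hε
    refine (ae_restrict_iff' measurableSet_Ioc).2 (ae_of_all _ fun μ hμ => ?_)
    have hμK : (μ : ℂ) ∈ K := hSK ⟨μ, ⟨hμ.1.le, hμ.2⟩, rfl⟩
    by_cases h : f ε = (μ : ℂ)
    · simp [h, hC0]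
    · rw [norm_div, div_le_iff₀ (norm_pos_iff.2 (sub_ne_zero.2 h))]
      exact hM _ hμK _ hε
  · exact integrableOn_const measure_Ioc_lt_top.ne
  · filter_upwards [h_ne] with μ hμ
    have hden : (t : ℂ) - (μ : ℂ) ≠ 0 := by
      rw [sub_ne_zero]
      intro h
      exact hμ (Complex.ofReal_inj.mp h).symm
    have hνc : ContinuousAt ν (t : ℂ) := (hν.differentiableAt (hU.mem_nhds hc)).continuousAt
    exact ((hνc.tendsto.comp hf).sub tendsto_const_nhds).div
      (hf.sub tendsto_const_nhds) hden

/-- The jump relation `α₊(t) · e^{2iπν(t)} = α₋(t)` across `(-q,q)` for the function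
`α(λ) = κ(λ) · ((λ+q)/(λ-q))^{ν(λ)}` (principal branch). -/
theorem statement3 (q : ℝ) (hq : 0 < q) (U : Set ℂ) (hU : IsOpen U)
    (hsub : (fun x : ℝ => (x : ℂ)) '' Set.Icc (-q) q ⊆ U)
    (ν : ℂ → ℂ) (hν : DifferentiableOn ℂ ν U)
    (κ α : ℂ → ℂ)
    (hκ : ∀ lam : ℂ,
      κ lam = Complex.exp (-∫ μ in (-q)..q, (ν lam - ν (μ : ℂ)) / (lam - (μ : ℂ))))
    (hα : ∀ lam : ℂ,
      α lam = κ lam * Complex.exp (ν lam * Complex.log ((lam + q) / (lam - q))))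
    (t : ℝ) (ht1 : -q < t) (ht2 : t < q) :
    ∃ ap am : ℂ,
      Filter.Tendsto (fun ε : ℝ => α ((t : ℂ) + ε * Complex.I))
        (nhdsWithin 0 (Set.Ioi 0)) (nhds ap) ∧
      Filter.Tendsto (fun ε : ℝ => α ((t : ℂ) - ε * Complex.I))
        (nhdsWithin 0 (Set.Ioi 0)) (nhds am) ∧
      ap * Complex.exp (2 * (Real.pi : ℂ) * Complex.I * ν (t : ℂ)) = am := by
  have hc : (t : ℂ) ∈ U := hsub ⟨t, ⟨ht1.le, ht2.le⟩, rfl⟩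
  have hνc : ContinuousAt ν (t : ℂ) := (hν.differentiableAt (hU.mem_nhds hc)).continuousAt
  -- the two approach paths
  have hlp : Tendsto (fun ε : ℝ => (t : ℂ) + ε * Complex.I) (𝓝[>] (0:ℝ)) (𝓝 (t : ℂ)) := by
    have hcont : Continuous (fun ε : ℝ => (t : ℂ) + ε * Complex.I) :=
      continuous_const.add (Complex.continuous_ofReal.mul continuous_const)
    simpa using (hcont.tendsto 0).mono_left nhdsWithin_le_nhds
  have hlm : Tendsto (fun ε : ℝ => (t : ℂ) - ε * Complex.I) (𝓝[>] (0:ℝ)) (𝓝 (t : ℂ)) := by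
    have hcont : Continuous (fun ε : ℝ => (t : ℂ) - ε * Complex.I) :=
      continuous_const.sub (Complex.continuous_ofReal.mul continuous_const)
    simpa using (hcont.tendsto 0).mono_left nhdsWithin_le_nhds
  -- κ limits
  have hioc : ∀ lam : ℂ,
      κ lam = Complex.exp (-∫ μ in Ioc (-q) q, (ν lam - ν (μ : ℂ)) / (lam - (μ : ℂ))) := by
    intro lam
    rw [hκ lam, intervalIntegral.integral_of_le (by linarith)]
  set J : ℂ := ∫ μ in Ioc (-q) q, (ν (t : ℂ) - ν (μ : ℂ)) / ((t : ℂ) - (μ : ℂ)) with hJ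
  have hκp : Tendsto (fun ε : ℝ => κ ((t : ℂ) + ε * Complex.I)) (𝓝[>] (0:ℝ))
      (𝓝 (Complex.exp (-J))) := by
    have h := (jump_kappa_integral_tendsto q hq U hU hsub ν hν t ht1 ht2 _ hlp).neg
    exact ((Complex.continuous_exp.tendsto _).comp h).congr fun ε => (hioc _).symm
  have hκm : Tendsto (fun ε : ℝ => κ ((t : ℂ) - ε * Complex.I)) (𝓝[>] (0:ℝ))
      (𝓝 (Complex.exp (-J))) := by
    have h := (jump_kappa_integral_tendsto q hq U hU hsub ν hν t ht1 ht2 _ hlm).neg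
    exact ((Complex.continuous_exp.tendsto _).comp h).congr fun ε => (hioc _).symm
  -- the limit point of the Möbius map
  set z₀ : ℂ := ((t : ℂ) + q) / ((t : ℂ) - q) with hz₀
  have hz₀' : z₀ = (((t + q) / (t - q) : ℝ) : ℂ) := by
    rw [hz₀]; push_cast; ring
  have hre : z₀.re < 0 := by
    rw [hz₀', Complex.ofReal_re]
    exact div_neg_of_pos_of_neg (by linarith) (by linarith)
  have him0 : z₀.im = 0 := by rw [hz₀', Complex.ofReal_im]
  have hdenne : (t : ℂ) - q ≠ 0 := by
    rw [sub_ne_zero]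
    exact_mod_cast fun h => (by linarith : t ≠ q) h
  -- imaginary part computations
  have hnum : ∀ ε : ℝ, ∀ s : ℝ, (((t : ℂ) + s * Complex.I + q) / ((t : ℂ) + s * Complex.I - q)).im
      = (-(2 * q * s)) / Complex.normSq ((t : ℂ) + s * Complex.I - q) := by
    intro ε s
    rw [Complex.div_im]
    simp only [Complex.add_im, Complex.add_re, Complex.sub_im, Complex.sub_re,
      Complex.ofReal_im, Complex.ofReal_re, Complex.mul_im, Complex.mul_re,
      Complex.I_re, Complex.I_im]
    ring
  have hwne : ∀ s : ℝ, s ≠ 0 → ((t : ℂ) + s * Complex.I - q) ≠ 0 := by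
    intro s hs h
    have := congrArg Complex.im h
    simp at this
    exact hs this
  -- log limits
  have hlogp : Tendsto (fun ε : ℝ =>
      Complex.log (((t : ℂ) + ε * Complex.I + q) / ((t : ℂ) + ε * Complex.I - q)))
      (𝓝[>] (0:ℝ)) (𝓝 ((Real.log (‖z₀‖) : ℂ) - Real.pi * Complex.I)) := by
    refine (Complex.tendsto_log_nhdsWithin_im_neg_of_re_neg_of_im_zero hre him0).comp ?_
    rw [tendsto_nhdsWithin_iff]
    constructor
    · exact ((hlp.add_const (q:ℂ)).div (hlp.sub_const (q:ℂ)) hdenne)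
    · refine eventually_nhdsWithin_of_forall fun ε hε => ?_
      have hε' : (0:ℝ) < ε := hε
      show (((t : ℂ) + ε * Complex.I + q) / ((t : ℂ) + ε * Complex.I - q)).im < 0
      rw [hnum ε ε]
      apply div_neg_of_neg_of_pos
      · nlinarith
      · exact Complex.normSq_pos.2 (hwne ε hε'.ne')
  have hlogm : Tendsto (fun ε : ℝ =>
      Complex.log (((t : ℂ) - ε * Complex.I + q) / ((t : ℂ) - ε * Complex.I - q)))
      (𝓝[>] (0:ℝ)) (𝓝 ((Real.log (‖z₀‖) : ℂ) + Real.pi * Complex.I)) := by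
    refine (Complex.tendsto_log_nhdsWithin_im_nonneg_of_re_neg_of_im_zero hre him0).comp ?_
    rw [tendsto_nhdsWithin_iff]
    constructor
    · exact ((hlm.add_const (q:ℂ)).div (hlm.sub_const (q:ℂ)) hdenne)
    · refine eventually_nhdsWithin_of_forall fun ε hε => ?_
      have hε' : (0:ℝ) < ε := hε
      show 0 ≤ (((t : ℂ) - ε * Complex.I + q) / ((t : ℂ) - ε * Complex.I - q)).im
      have heq : ((t : ℂ) - ε * Complex.I) = ((t : ℂ) + (-ε : ℝ) * Complex.I) := by
        push_cast; ring
      rw [heq, hnum (-ε) (-ε)]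
      apply le_of_lt
      apply div_pos
      · nlinarith
      · exact Complex.normSq_pos.2 (hwne (-ε) (by simpa using hε'.ne'))
  -- ν limits
  have hνp : Tendsto (fun ε : ℝ => ν ((t : ℂ) + ε * Complex.I)) (𝓝[>] (0:ℝ))
      (𝓝 (ν (t : ℂ))) := hνc.tendsto.comp hlp
  have hνm : Tendsto (fun ε : ℝ => ν ((t : ℂ) - ε * Complex.I)) (𝓝[>] (0:ℝ))
      (𝓝 (ν (t : ℂ))) := hνc.tendsto.comp hlm
  set L : ℂ := (Real.log (‖z₀‖) : ℂ) with hL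
  refine ⟨Complex.exp (-J) * Complex.exp (ν (t : ℂ) * (L - Real.pi * Complex.I)),
    Complex.exp (-J) * Complex.exp (ν (t : ℂ) * (L + Real.pi * Complex.I)), ?_, ?_, ?_⟩
  · simp only [hα]
    exact hκp.mul ((Complex.continuous_exp.tendsto _).comp (hνp.mul hlogp))
  · simp only [hα]
    exact hκm.mul ((Complex.continuous_exp.tendsto _).comp (hνm.mul hlogm))
  · rw [mul_assoc, ← Complex.exp_add]
    congr 2
    ring
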